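/- Let μ > 0 and let i, j be real numbers with 0 ≤ i < j ≤ μ. Then G_μ((i+j)/2) < ((1−Θ)/(2−Θ))·G_μ(i) + (1/(2−Θ))·G_μ(j), where Θ = Θ(i, j, μ). -/

import Mathlib

/-- The function `g(x) = (1/π)(√(1−x²) − x·arccos x)`. -/
noncomputable def g (x : ℝ) : ℝ := (1 / Real.pi) * (Real.sqrt (1 - x ^ 2) - x * Real.arccos x)

/-- For `μ > 0`, `G_μ(x) = μ·g(x/μ)`. -/
noncomputable def G (μ x : ℝ) : ℝ := μ * g (x / μ)

/-- `Θ(i,j,μ) = ((j−i)/(2μ))·g''(i/μ)/|g'(i/μ)| = (j−i)/(2μ·arccos(i/μ)·√(1−(i/μ)²))`. -/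
noncomputable def Θ (i j μ : ℝ) : ℝ :=
  (j - i) / (2 * μ * Real.arccos (i / μ) * Real.sqrt (1 - (i / μ) ^ 2))

lemma g_hasDerivAt {x : ℝ} (h1 : -1 < x) (h2 : x < 1) :
    HasDerivAt g (-(Real.arccos x) / Real.pi) x := by
  have hs : (0:ℝ) < 1 - x ^ 2 := by nlinarith
  have hsne : Real.sqrt (1 - x ^ 2) ≠ 0 := by positivity
  have d1 : HasDerivAt (fun x : ℝ => 1 - x ^ 2) (-(2 * x)) x := by
    simpa using (hasDerivAt_pow 2 x).const_sub 1
  have d2 : HasDerivAt (fun x : ℝ => Real.sqrt (1 - x ^ 2))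
      (1 / (2 * Real.sqrt (1 - x ^ 2)) * (-(2 * x))) x :=
    (Real.hasDerivAt_sqrt hs.ne').comp x d1
  have d3 : HasDerivAt Real.arccos (-(1 / Real.sqrt (1 - x ^ 2))) x :=
    Real.hasDerivAt_arccos (by linarith) (by linarith)
  have d4 : HasDerivAt (fun x : ℝ => x * Real.arccos x)
      (1 * Real.arccos x + x * -(1 / Real.sqrt (1 - x ^ 2))) x :=
    (hasDerivAt_id x).mul d3
  have d5 := ((d2.sub d4).const_mul (1 / Real.pi))
  refine (d5.congr_deriv ?_ : HasDerivAt g _ x)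
  have hπ := Real.pi_ne_zero
  field_simp
  ring

lemma g_continuous : Continuous g := by
  unfold g
  have := Real.continuous_arccos
  continuity

/-- FTC for `g` with derivative `-arccos/π`. -/
lemma g_ftc {a b : ℝ} (ha : 0 ≤ a) (hab : a ≤ b) (hb : b ≤ 1) :
    ∫ t in a..b, (-(Real.arccos t) / Real.pi) = g b - g a := by
  apply intervalIntegral.integral_eq_sub_of_hasDeriv_right_of_le hab
    g_continuous.continuousOn
  · intro t ht
    exact (g_hasDerivAt (by linarith [ht.1]) (by linarith [ht.2])).hasDerivWithinAt
  · apply Continuous.intervalIntegrable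
    have := Real.continuous_arccos
    continuity

lemma gA {x m : ℝ} (hx : 0 ≤ x) (hxm : x < m) (hm : m < 1) :
    g x - g m < (m - x) * (Real.arccos x / Real.pi) := by
  obtain ⟨c, hc, hs⟩ := exists_hasDerivAt_eq_slope g (fun t => -(Real.arccos t) / Real.pi)
    hxm g_continuous.continuousOn
    (fun t ht => g_hasDerivAt (by linarith [ht.1]) (by linarith [ht.2]))
  have hlt : Real.arccos c < Real.arccos x :=
    Real.strictAntiOn_arccos ⟨by linarith, by linarith⟩
      ⟨by linarith [hc.1], le_of_lt (lt_trans hc.2 hm)⟩ hc.1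
  have hπ := Real.pi_pos
  have hmx : 0 < m - x := by linarith
  have this : g m - g x = (m - x) * (-(Real.arccos c) / Real.pi) := by
    field_simp [hmx.ne'] at hs
    field_simp
    linarith
  rw [show g x - g m = -(g m - g x) by ring, this,
    show -((m - x) * (-(Real.arccos c) / Real.pi)) = (m - x) * Real.arccos c / Real.pi by ring,
    show (m - x) * (Real.arccos x / Real.pi) = (m - x) * Real.arccos x / Real.pi by ring]
  have harc : 0 ≤ Real.arccos c := Real.arccos_nonneg c
  gcongr

lemma arccos_gap {x t h : ℝ} (hx : 0 ≤ x) (hxt : x ≤ t) (hh : 0 < h) (ht1 : t + h ≤ 1) :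
    h / Real.sqrt (1 - x ^ 2) ≤ Real.arccos t - Real.arccos (t + h) := by
  obtain ⟨c, hc, hs⟩ := exists_hasDerivAt_eq_slope Real.arccos
    (fun s => -(1 / Real.sqrt (1 - s ^ 2))) (by linarith : t < t + h)
    Real.continuous_arccos.continuousOn
    (fun s hs => Real.hasDerivAt_arccos (by nlinarith [hs.1, hs.2]) (by linarith [hs.2]))
  have hc0 : 0 ≤ c := le_trans (le_trans hx hxt) hc.1.le
  have hc1 : c < 1 := lt_of_lt_of_le hc.2 ht1
  have hcs : (0:ℝ) < 1 - c ^ 2 := by nlinarith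
  have hxs : (0:ℝ) < 1 - x ^ 2 := by nlinarith [lt_of_le_of_lt (le_trans hxt hc.1.le) hc1]
  have hsl : Real.sqrt (1 - c ^ 2) ≤ Real.sqrt (1 - x ^ 2) := by
    apply Real.sqrt_le_sqrt
    nlinarith [le_trans hxt hc.1.le]
  have hsc : 0 < Real.sqrt (1 - c ^ 2) := Real.sqrt_pos.mpr hcs
  have key : Real.arccos t - Real.arccos (t + h) = h / Real.sqrt (1 - c ^ 2) := by
    field_simp [hh.ne'] at hs
    field_simp
    linarith
  rw [key]
  gcongr

lemma gB {x y : ℝ} (hx : 0 ≤ x) (hxy : x < y) (hy : y ≤ 1) :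
    ((y - x) / 2) ^ 2 / (Real.pi * Real.sqrt (1 - x ^ 2)) ≤
      g x + g y - 2 * g ((x + y) / 2) := by
  set h : ℝ := (y - x) / 2 with hh_def
  set m : ℝ := (x + y) / 2 with hm_def
  have hh : 0 < h := by simp only [hh_def]; linarith
  have hxm : x < m := by simp only [hm_def]; linarith
  have hmy : m < y := by simp only [hm_def]; linarith
  have hm1 : m < 1 := lt_of_lt_of_le hmy hy
  have hmxh : m = x + h := by simp only [hm_def, hh_def]; ring
  have hymh : y = m + h := by simp only [hm_def, hh_def]; ring
  have e1 : g m - g x = ∫ t in x..m, (-(Real.arccos t) / Real.pi) :=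
    (g_ftc hx hxm.le hm1.le).symm
  have e2 : g y - g m = ∫ t in m..y, (-(Real.arccos t) / Real.pi) :=
    (g_ftc (by linarith) hmy.le hy).symm
  have e3 : (∫ t in m..y, (-(Real.arccos t) / Real.pi)) =
      ∫ t in x..m, (-(Real.arccos (t + h)) / Real.pi) := by
    rw [intervalIntegral.integral_comp_add_right (fun s => -(Real.arccos s) / Real.pi) h]
    rw [← hmxh, ← hymh]
  have hπ := Real.pi_pos
  have hxs : (0:ℝ) < 1 - x ^ 2 := by nlinarith
  have hsx : 0 < Real.sqrt (1 - x ^ 2) := Real.sqrt_pos.mpr hxs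
  have key : (m - x) * (h / (Real.pi * Real.sqrt (1 - x ^ 2))) ≤
      ∫ t in x..m, (-(Real.arccos (t + h)) / Real.pi - -(Real.arccos t) / Real.pi) := by
    have hint : IntervalIntegrable
        (fun t => -(Real.arccos (t + h)) / Real.pi - -(Real.arccos t) / Real.pi)
        MeasureTheory.volume x m := by
      exact (((Real.continuous_arccos.comp (continuous_id.add continuous_const)).neg.div_const
        Real.pi).sub (Real.continuous_arccos.neg.div_const Real.pi)).intervalIntegrable _ _
    have := intervalIntegral.integral_mono_on (μ := MeasureTheory.volume)
      (f := fun _ : ℝ => h / (Real.pi * Real.sqrt (1 - x ^ 2)))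
      (g := fun t => -(Real.arccos (t + h)) / Real.pi - -(Real.arccos t) / Real.pi)
      hxm.le (intervalIntegrable_const) hint ?_
    · calc (m - x) * (h / (Real.pi * Real.sqrt (1 - x ^ 2)))
          = ∫ _ in x..m, h / (Real.pi * Real.sqrt (1 - x ^ 2)) := by
            rw [intervalIntegral.integral_const, smul_eq_mul]
        _ ≤ _ := this
    · intro t ht
      have h1 : h / Real.sqrt (1 - x ^ 2) ≤ Real.arccos t - Real.arccos (t + h) :=
        arccos_gap hx ht.1 hh (by rw [hymh] at hy; linarith [ht.2])
      rw [show h / (Real.pi * Real.sqrt (1 - x ^ 2))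
            = (h / Real.sqrt (1 - x ^ 2)) / Real.pi by
              rw [mul_comm Real.pi (Real.sqrt (1 - x ^ 2)), ← div_div],
        show -(Real.arccos (t + h)) / Real.pi - -(Real.arccos t) / Real.pi
            = (Real.arccos t - Real.arccos (t + h)) / Real.pi by ring]
      gcongr
  have hint1 : IntervalIntegrable (fun t : ℝ => -(Real.arccos (t + h)) / Real.pi)
      MeasureTheory.volume x m :=
    ((Real.continuous_arccos.comp (continuous_id.add continuous_const)).neg.div_const
      Real.pi).intervalIntegrable _ _
  have hint2 : IntervalIntegrable (fun t : ℝ => -(Real.arccos t) / Real.pi)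
      MeasureTheory.volume x m :=
    (Real.continuous_arccos.neg.div_const Real.pi).intervalIntegrable _ _
  have esplit : g x + g y - 2 * g m =
      ∫ t in x..m, (-(Real.arccos (t + h)) / Real.pi - -(Real.arccos t) / Real.pi) := by
    rw [intervalIntegral.integral_sub hint1 hint2, ← e3, ← e2, ← e1]
    ring
  rw [esplit]
  have : (m - x) = h := by rw [hmxh]; ring
  calc h ^ 2 / (Real.pi * Real.sqrt (1 - x ^ 2))
      = (m - x) * (h / (Real.pi * Real.sqrt (1 - x ^ 2))) := by
        rw [this]; ring
    _ ≤ _ := key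

/-- Lemma 2.2: for `0 ≤ i < j ≤ μ`,
`G_μ((i+j)/2) < ((1−Θ)/(2−Θ))·G_μ(i) + (1/(2−Θ))·G_μ(j)` with `Θ = Θ(i,j,μ)`. -/
theorem stmt1 (μ i j : ℝ) (hμ : 0 < μ) (hi : 0 ≤ i) (hij : i < j) (hj : j ≤ μ) :
    G μ ((i + j) / 2) <
      (1 - Θ i j μ) / (2 - Θ i j μ) * G μ i + 1 / (2 - Θ i j μ) * G μ j := by
  set x := i / μ with hx_def
  set y := j / μ with hy_def
  have hμ' : (μ:ℝ) ≠ 0 := hμ.ne'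
  have hx : 0 ≤ x := div_nonneg hi hμ.le
  have hxy : x < y := by rw [hx_def, hy_def]; gcongr
  have hy1 : y ≤ 1 := by rw [hy_def]; exact (div_le_one hμ).mpr hj
  have hx1 : x < 1 := lt_of_lt_of_le hxy hy1
  have hπ := Real.pi_pos
  have hA : 0 < Real.arccos x := Real.arccos_pos.mpr hx1
  have hxs : (0:ℝ) < 1 - x ^ 2 := by nlinarith
  have hS : 0 < Real.sqrt (1 - x ^ 2) := Real.sqrt_pos.mpr hxs
  set h : ℝ := (y - x) / 2 with hh_def
  have hh : 0 < h := by rw [hh_def]; linarith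
  have hiμ : i = μ * x := by rw [hx_def]; field_simp
  have hjμ : j = μ * y := by rw [hy_def]; field_simp
  have hθ_eq : Θ i j μ = h / (Real.arccos x * Real.sqrt (1 - x ^ 2)) := by
    rw [Θ, ← hx_def, hh_def, hiμ, hjμ]
    field_simp
  set θ := Θ i j μ with hθ_def
  have hθpos : 0 < θ := by rw [hθ_eq]; positivity
  have hsin : Real.sqrt (1 - x ^ 2) ≤ Real.arccos x := by
    rw [← Real.sin_arccos]
    exact Real.sin_le (Real.arccos_nonneg x)
  have hsq : Real.sqrt (1 - x ^ 2) ^ 2 = 1 - x ^ 2 := Real.sq_sqrt hxs.le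
  have hAS : 1 - x ≤ Real.arccos x * Real.sqrt (1 - x ^ 2) := by
    nlinarith
  have hθle : θ ≤ 1 / 2 := by
    rw [hθ_eq, div_le_iff₀ (by positivity)]
    have hh2 : h ≤ (1 - x) / 2 := by rw [hh_def]; linarith
    nlinarith
  have hD : 0 < 2 - θ := by linarith
  have hmx : x < (x + y) / 2 := by linarith
  have hm1 : (x + y) / 2 < 1 := by linarith
  have hgA : g x - g ((x + y) / 2) < h * (Real.arccos x / Real.pi) := by
    have := gA hx hmx hm1
    have e : (x + y) / 2 - x = h := by rw [hh_def]; ring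
    rwa [e] at this
  have hgB : h ^ 2 / (Real.pi * Real.sqrt (1 - x ^ 2)) ≤
      g x + g y - 2 * g ((x + y) / 2) := by
    have := gB hx hxy hy1
    have e : ((y - x) / 2) ^ 2 = h ^ 2 := by rw [hh_def]
    rwa [e] at this
  have key : θ * (g x - g ((x + y) / 2)) < g x + g y - 2 * g ((x + y) / 2) := by
    have e1 : θ * (h * (Real.arccos x / Real.pi)) =
        h ^ 2 / (Real.pi * Real.sqrt (1 - x ^ 2)) := by
      rw [hθ_eq]
      field_simp
    calc θ * (g x - g ((x + y) / 2)) < θ * (h * (Real.arccos x / Real.pi)) :=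
          mul_lt_mul_of_pos_left hgA hθpos
      _ = h ^ 2 / (Real.pi * Real.sqrt (1 - x ^ 2)) := e1
      _ ≤ _ := hgB
  have main : g ((x + y) / 2) < (1 - θ) / (2 - θ) * g x + 1 / (2 - θ) * g y := by
    have h2 : (2 - θ) * g ((x + y) / 2) < (1 - θ) * g x + g y := by linarith
    calc g ((x + y) / 2) = (2 - θ) * g ((x + y) / 2) / (2 - θ) := by field_simp
      _ < ((1 - θ) * g x + g y) / (2 - θ) := by gcongr
      _ = (1 - θ) / (2 - θ) * g x + 1 / (2 - θ) * g y := by ring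
  have hGm : G μ ((i + j) / 2) = μ * g ((x + y) / 2) := by
    rw [G, hiμ, hjμ]
    congr 2
    field_simp
  have hGi : G μ i = μ * g x := by rw [G, ← hx_def]
  have hGj : G μ j = μ * g y := by rw [G, ← hy_def]
  rw [hGm, hGi, hGj,
    show (1 - θ) / (2 - θ) * (μ * g x) + 1 / (2 - θ) * (μ * g y)
        = μ * ((1 - θ) / (2 - θ) * g x + 1 / (2 - θ) * g y) by ring]
  exact mul_lt_mul_of_pos_left main hμ
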